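/- (Theorem 1) Let u = ⌈n/2⌉ and I = { k : 2 ≤ k ≤ u and c_k < c_{n+2−k} }. Suppose the entries of c are positive and pairwise distinct, I is nonempty, and there is at least one k with 2 ≤ k ≤ u and c_k > c_{n+2−k} (so neither of the two conditions 'c_k < c_{n+2−k} for all 2 ≤ k ≤ u' and 'c_k > c_{n+2−k} for all 2 ≤ k ≤ u' holds). Let c^I be the sum-'n+2' transform of c, obtained by swapping c_k and c_{n+2−k} for every k ∈ I. Then f(c^I) > f(c), i.e. the sum-'n+2' transform produces a better sequence. -/

import Mathlib

open Finset

/-- Partial sums of the sequence `c` (1-indexed): `partSum c k = c 1 + ⋯ + c k`. -/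
noncomputable def partSum (c : ℕ → ℝ) (k : ℕ) : ℝ := ∑ i ∈ Finset.Icc 1 k, c i

/-- The mean `S̄` of the partial sums `s_1, …, s_n`. -/
noncomputable def meanPS (n : ℕ) (c : ℕ → ℝ) : ℝ :=
  (1 / (n : ℝ)) * ∑ k ∈ Finset.Icc 1 n, partSum c k

/-- The variance `f(c)` of the partial sums `s_1, …, s_n`. -/
noncomputable def varPS (n : ℕ) (c : ℕ → ℝ) : ℝ :=
  (1 / (n : ℝ)) * ∑ k ∈ Finset.Icc 1 n, (partSum c k - meanPS n c) ^ 2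

/-- The `(i,j)`-partial mean `μ_{ij}(S) = (1/(j-i)) ∑_{k=i}^{j-1} s_k`. -/
noncomputable def partMean (c : ℕ → ℝ) (i j : ℕ) : ℝ :=
  (1 / ((j : ℝ) - (i : ℝ))) * ∑ k ∈ Finset.Icc i (j - 1), partSum c k

/-- The `(i,j)`-interchange of `c`: swap the entries in positions `i` and `j`. -/
noncomputable def swapSeq (c : ℕ → ℝ) (i j : ℕ) : ℕ → ℝ := fun k => c (Equiv.swap i j k)

/-- `c` is an arrangement (permutation) of `a` on the index range `1..n`. -/
def IsArrangement (n : ℕ) (a c : ℕ → ℝ) : Prop :=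
  ∃ σ : ℕ → ℕ, Set.BijOn σ (Set.Icc 1 n) (Set.Icc 1 n) ∧
    ∀ k ∈ Set.Icc 1 n, c k = a (σ k)

/-- The dual sequence `c^d = (c_1, c_n, c_{n-1}, …, c_2)`. -/
noncomputable def dualSeq (n : ℕ) (c : ℕ → ℝ) : ℕ → ℝ :=
  fun k => if 2 ≤ k then c (n + 2 - k) else c k

/-- Swap `c_k` and `c_{n+2-k}` simultaneously for every `k ∈ I` (where `I ⊆ {2,…,⌈n/2⌉}`,
so the swapped pairs are pairwise disjoint). -/
noncomputable def sumSwapN2 (n : ℕ) (I : Finset ℕ) (c : ℕ → ℝ) : ℕ → ℝ :=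
  fun k => if k ∈ I ∨ n + 2 - k ∈ I then c (n + 2 - k) else c k

namespace SumSwapAux

theorem cast_sub' {a b : ℕ} (h : b ≤ a) : ((a - b : ℕ) : ℝ) = (a : ℝ) - b := by
  rw [Nat.cast_sub h]

/-- The coefficient `q m k = n (k-m)⁺ - (k-1)(n+2-2m)`. -/
noncomputable def qq (n m k : ℕ) : ℝ :=
  (n : ℝ) * ((k - m : ℕ) : ℝ) - ((k : ℝ) - 1) * ((n : ℝ) + 2 - 2 * (m : ℝ))

variable (n : ℕ) (c : ℕ → ℝ) (I : Finset ℕ)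

/-- `d m = c (n+2-m) - c m`. -/
noncomputable def dd (m : ℕ) : ℝ := c (n + 2 - m) - c m

/-- `v k = ∑_{m ∈ I, m ≤ k ≤ n+1-m} d m`. -/
noncomputable def vv (k : ℕ) : ℝ :=
  ∑ m ∈ I, if m ≤ k ∧ k + m ≤ n + 1 then dd n c m else 0

/-- prefix sums of `v`. -/
noncomputable def vvhat (j : ℕ) : ℝ := ∑ k ∈ Icc 1 j, vv n c I k

/-- total sum of `v`. -/
noncomputable def VV : ℝ := ∑ k ∈ Icc 1 n, vv n c I k

theorem sum_split (f : ℕ → ℝ) {a b : ℕ} (hab : a ≤ b) (hbn : b ≤ n) :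
    ∑ k ∈ Icc 1 n, f k
      = ∑ k ∈ Icc 1 a, f k + ∑ k ∈ Icc (a + 1) b, f k + ∑ k ∈ Icc (b + 1) n, f k := by
  have e0 : ∀ j : ℕ, Icc 1 j = Ioc 0 j := fun j => by
    ext x; simp [Finset.mem_Icc, Finset.mem_Ioc]; omega
  have e1 : ∀ i j : ℕ, Icc (i + 1) j = Ioc i j := fun i j => by
    ext x; simp [Finset.mem_Icc, Finset.mem_Ioc]
  rw [e0, e0, e1, e1]
  rw [Finset.sum_Ioc_consecutive f (by omega : (0:ℕ) ≤ a) hab,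
    Finset.sum_Ioc_consecutive f (by omega : (0:ℕ) ≤ b) hbn]

theorem sum_partSum (a b : ℕ) :
    ∑ k ∈ Icc a b, partSum c k
      = ∑ i ∈ Icc 1 b, ((b + 1 - max a i : ℕ) : ℝ) * c i := by
  have h1 : ∀ k ∈ Icc a b, partSum c k = ∑ i ∈ Icc 1 b, if i ≤ k then c i else 0 := by
    intro k hk
    rw [Finset.mem_Icc] at hk
    unfold partSum
    rw [← Finset.sum_filter]
    congr 1
    ext x
    simp only [Finset.mem_filter, Finset.mem_Icc]
    omega
  rw [Finset.sum_congr rfl h1, Finset.sum_comm]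
  refine Finset.sum_congr rfl fun i hi => ?_
  rw [Finset.mem_Icc] at hi
  rw [← Finset.sum_filter]
  have : (Icc a b).filter (fun k => i ≤ k) = Icc (max a i) b := by
    ext x
    simp only [Finset.mem_filter, Finset.mem_Icc]
    omega
  rw [this, Finset.sum_const, Nat.card_Icc, nsmul_eq_mul]

/-- The key linear identity (★). -/
theorem star {n m u : ℕ} (c : ℕ → ℝ) (hm2 : 2 ≤ m) (hmu : m ≤ u)
    (hu : 2 * u ≤ n + 1) (hun : n ≤ 2 * u) :
    (n : ℝ) * (∑ k ∈ Icc m (n + 1 - m), partSum c k)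
      - ((n : ℝ) + 2 - 2 * m) * (∑ k ∈ Icc 1 n, partSum c k)
      = ∑ k ∈ Icc 2 u, (c (n + 2 - k) - c k) * qq n m k := by
  rw [sum_partSum c m (n + 1 - m), sum_partSum c 1 n]
  have ext1 : ∑ i ∈ Icc 1 (n + 1 - m), ((n + 1 - m + 1 - max m i : ℕ) : ℝ) * c i
      = ∑ i ∈ Icc 1 n, ((n + 1 - m + 1 - max m i : ℕ) : ℝ) * c i := by
    apply Finset.sum_subset (Finset.Icc_subset_Icc le_rfl (by omega))
    intro x hx hnx
    rw [Finset.mem_Icc] at hx hnx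
    have h1 : max m x = x := by omega
    have h2 : n + 1 - m + 1 - x = 0 := by omega
    rw [h1, h2]
    simp
  rw [ext1]
  have rsplit : ∀ k ∈ Icc 2 u, (c (n + 2 - k) - c k) * qq n m k
      = (qq n m k * c (n + 2 - k)) - (qq n m k * c k) := fun k _ => by ring
  rw [Finset.sum_congr rfl rsplit, Finset.sum_sub_distrib]
  have re : ∑ k ∈ Icc 2 u, qq n m k * c (n + 2 - k)
      = ∑ i ∈ Icc (n + 2 - u) n, qq n m (n + 2 - i) * c i := by
    apply Finset.sum_nbij' (i := fun k => n + 2 - k) (j := fun i => n + 2 - i)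
    · intro a ha; rw [Finset.mem_Icc] at *; omega
    · intro a ha; rw [Finset.mem_Icc] at *; omega
    · intro a ha; rw [Finset.mem_Icc] at ha; omega
    · intro a ha; rw [Finset.mem_Icc] at ha; omega
    · intro a ha
      rw [Finset.mem_Icc] at ha
      have : n + 2 - (n + 2 - a) = a := by omega
      rw [this]
  rw [re]
  have c1 : ∑ i ∈ Icc (n + 2 - u) n, qq n m (n + 2 - i) * c i
      = ∑ i ∈ Icc 1 n, if n + 2 - u ≤ i then qq n m (n + 2 - i) * c i else 0 := by
    rw [Finset.sum_ite, Finset.sum_const_zero, add_zero]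
    apply Finset.sum_congr _ (fun x _ => rfl)
    ext x
    simp only [Finset.mem_filter, Finset.mem_Icc]
    omega
  have c2 : ∑ k ∈ Icc 2 u, qq n m k * c k
      = ∑ i ∈ Icc 1 n, if 2 ≤ i ∧ i ≤ u then qq n m i * c i else 0 := by
    rw [Finset.sum_ite, Finset.sum_const_zero, add_zero]
    apply Finset.sum_congr _ (fun x _ => rfl)
    ext x
    simp only [Finset.mem_filter, Finset.mem_Icc]
    omega
  rw [c1, c2, Finset.mul_sum, Finset.mul_sum, ← Finset.sum_sub_distrib, ← Finset.sum_sub_distrib]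
  refine Finset.sum_congr rfl fun i hi => ?_
  rw [Finset.mem_Icc] at hi
  obtain ⟨hi1, hin⟩ := hi
  have hmax1 : max 1 i = i := by omega
  rw [hmax1]
  have hB : ((n + 1 - i : ℕ) : ℝ) = (n : ℝ) + 1 - i := by
    rw [show n + 1 - i = (n+1) - i from rfl, cast_sub' (by omega)]; push_cast; ring
  by_cases h1 : m ≤ i
  · have hmax : max m i = i := by omega
    rw [hmax]
    by_cases h2 : i ≤ u
    · rw [if_neg (by omega), if_pos ⟨by omega, h2⟩]
      have hA : ((n + 1 - m + 1 - i : ℕ) : ℝ) = (n : ℝ) + 2 - m - i := by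
        rw [show n + 1 - m + 1 - i = (n+2) - (m+i) from by omega, cast_sub' (by omega)]
        push_cast; ring
      have hq : ((i - m : ℕ) : ℝ) = (i : ℝ) - m := cast_sub' h1
      rw [hA, hB]
      unfold qq
      rw [hq]
      ring
    · by_cases h3 : n + 2 - u ≤ i
      · by_cases h4 : i + m ≤ n + 1
        · rw [if_pos h3, if_neg (by omega)]
          have hA : ((n + 1 - m + 1 - i : ℕ) : ℝ) = (n : ℝ) + 2 - m - i := by
            rw [show n + 1 - m + 1 - i = (n+2) - (m+i) from by omega, cast_sub' (by omega)]
            push_cast; ring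
          have hq1 : ((n + 2 - i - m : ℕ) : ℝ) = (n : ℝ) + 2 - i - m := by
            rw [show n + 2 - i - m = (n+2) - (i+m) from by omega, cast_sub' (by omega)]
            push_cast; ring
          have hq2 : ((n + 2 - i : ℕ) : ℝ) = (n : ℝ) + 2 - i := by
            rw [show n + 2 - i = (n+2) - i from rfl, cast_sub' (by omega)]; push_cast; ring
          rw [hA, hB]
          unfold qq
          rw [hq1, hq2]
          ring
        · rw [if_pos h3, if_neg (by omega)]
          have hA : ((n + 1 - m + 1 - i : ℕ) : ℝ) = 0 := by
            rw [show n + 1 - m + 1 - i = 0 from by omega]; simp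
          have hq1 : ((n + 2 - i - m : ℕ) : ℝ) = 0 := by
            rw [show n + 2 - i - m = 0 from by omega]; simp
          have hq2 : ((n + 2 - i : ℕ) : ℝ) = (n : ℝ) + 2 - i := by
            rw [show n + 2 - i = (n+2) - i from rfl, cast_sub' (by omega)]; push_cast; ring
          rw [hA, hB]
          unfold qq
          rw [hq1, hq2]
          ring
      · have hn2 : n = 2 * u := by omega
        have hiu : i = u + 1 := by omega
        rw [if_neg h3, if_neg (by omega)]
        have hA : ((n + 1 - m + 1 - i : ℕ) : ℝ) = (n : ℝ) + 2 - m - i := by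
          rw [show n + 1 - m + 1 - i = (n+2) - (m+i) from by omega, cast_sub' (by omega)]
          push_cast; ring
        rw [hA, hB, hn2, hiu]
        push_cast
        ring
  · have hmax : max m i = m := by omega
    rw [hmax]
    have hA : ((n + 1 - m + 1 - m : ℕ) : ℝ) = (n : ℝ) + 2 - 2 * m := by
      rw [show n + 1 - m + 1 - m = (n+2) - (m+m) from by omega, cast_sub' (by omega)]
      push_cast; ring
    by_cases h5 : 2 ≤ i
    · rw [if_neg (by omega), if_pos ⟨h5, by omega⟩]
      have hq : ((i - m : ℕ) : ℝ) = 0 := by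
        rw [show i - m = 0 from by omega]; simp
      rw [hA, hB]
      unfold qq
      rw [hq]
      ring
    · have hi1' : i = 1 := by omega
      rw [if_neg (by omega), if_neg (by omega), hA, hB, hi1']
      push_cast
      ring

variable {n c I}
variable (hI : ∀ m ∈ I, 2 ≤ m ∧ 2 * m ≤ n + 1)
include hI

/-- Step 1: partial sums of the transform. -/
theorem partSum_swap {k : ℕ} (hk : k ≤ n) :
    partSum (sumSwapN2 n I c) k = partSum c k + vv n c I k := by
  have key : ∀ i ∈ Icc 1 k, sumSwapN2 n I c i
      = c i + ∑ m ∈ I, ((if i = m then dd n c m else 0)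
          + (if i = n + 2 - m then -dd n c m else 0)) := by
    intro i hi
    rw [Finset.mem_Icc] at hi
    have hsum2 : ∀ m ∈ I, (if i = n + 2 - m then -dd n c m else 0)
        = (if m = n + 2 - i then -dd n c m else 0) := by
      intro m hm
      obtain ⟨h2, hu⟩ := hI m hm
      congr 1
      exact propext (by omega)
    by_cases hiI : i ∈ I
    · have hni : n + 2 - i ∉ I := by
        intro h
        obtain ⟨h2, hu⟩ := hI i hiI
        obtain ⟨h2', hu'⟩ := hI _ h
        omega
      rw [Finset.sum_congr rfl (fun m hm => by rw [hsum2 m hm])]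
      rw [Finset.sum_add_distrib, Finset.sum_ite_eq I i, Finset.sum_ite_eq' I (n + 2 - i)]
      rw [if_pos hiI, if_neg hni]
      simp only [sumSwapN2, if_pos (Or.inl hiI), dd]
      ring
    · by_cases hni : n + 2 - i ∈ I
      · rw [Finset.sum_congr rfl (fun m hm => by rw [hsum2 m hm])]
        rw [Finset.sum_add_distrib, Finset.sum_ite_eq I i, Finset.sum_ite_eq' I (n + 2 - i)]
        rw [if_neg hiI, if_pos hni]
        obtain ⟨h2, hu⟩ := hI _ hni
        have hii : n + 2 - (n + 2 - i) = i := by omega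
        simp only [sumSwapN2, if_pos (Or.inr hni), dd, hii]
        ring
      · rw [Finset.sum_congr rfl (fun m hm => by rw [hsum2 m hm])]
        rw [Finset.sum_add_distrib, Finset.sum_ite_eq I i, Finset.sum_ite_eq' I (n + 2 - i)]
        rw [if_neg hiI, if_neg hni]
        simp only [sumSwapN2, if_neg (by tauto : ¬(i ∈ I ∨ n + 2 - i ∈ I))]
        ring
  unfold partSum
  rw [Finset.sum_congr rfl key, Finset.sum_add_distrib]
  congr 1
  rw [Finset.sum_comm]
  unfold vv
  refine Finset.sum_congr rfl fun m hm => ?_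
  obtain ⟨h2, hu⟩ := hI m hm
  rw [Finset.sum_add_distrib, Finset.sum_ite_eq' (Icc 1 k) m,
    Finset.sum_ite_eq' (Icc 1 k) (n + 2 - m)]
  simp only [Finset.mem_Icc]
  by_cases h1 : m ≤ k
  · by_cases h2' : k + m ≤ n + 1
    · rw [if_pos ⟨by omega, h1⟩, if_neg (by omega), if_pos ⟨h1, h2'⟩]; ring
    · rw [if_pos ⟨by omega, h1⟩, if_pos ⟨by omega, by omega⟩, if_neg (by omega)]; ring
  · rw [if_neg (by omega), if_neg (by omega), if_neg (by omega)]; ring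

/-- Step 4: inner products against `v`. -/
theorem inner_vv (g : ℕ → ℝ) :
    ∑ k ∈ Icc 1 n, g k * vv n c I k
      = ∑ m ∈ I, dd n c m * ∑ k ∈ Icc m (n + 1 - m), g k := by
  unfold vv
  simp only [Finset.mul_sum, mul_ite, mul_zero]
  rw [Finset.sum_comm]
  refine Finset.sum_congr rfl fun m hm => ?_
  obtain ⟨h2, hu⟩ := hI m hm
  rw [← Finset.sum_filter]
  have : (Icc 1 n).filter (fun k => m ≤ k ∧ k + m ≤ n + 1) = Icc m (n + 1 - m) := by
    ext x
    simp only [Finset.mem_filter, Finset.mem_Icc]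
    omega
  rw [this]
  exact Finset.sum_congr rfl fun k _ => mul_comm _ _

theorem vv_symm {k : ℕ} (hk : k ≤ n) :
    vv n c I (n + 1 - k) = vv n c I k := by
  unfold vv
  refine Finset.sum_congr rfl fun m hm => ?_
  obtain ⟨h2, hu⟩ := hI m hm
  congr 1
  exact propext (by omega)

theorem tail_eq {a : ℕ} (han : a ≤ n) :
    ∑ k ∈ Icc (n + 1 - a) n, vv n c I k = ∑ k ∈ Icc 1 a, vv n c I k := by
  apply Finset.sum_nbij' (i := fun k => n + 1 - k) (j := fun k => n + 1 - k)
  · intro x hx; rw [Finset.mem_Icc] at *; omega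
  · intro x hx; rw [Finset.mem_Icc] at *; omega
  · intro x hx; rw [Finset.mem_Icc] at hx; omega
  · intro x hx; rw [Finset.mem_Icc] at hx; omega
  · intro x hx
    rw [Finset.mem_Icc] at hx
    have h := vv_symm (c := c) hI (show n + 1 - x ≤ n by omega)
    rw [show n + 1 - (n + 1 - x) = x from by omega] at h
    exact h

/-- the middle-sum identity. -/
theorem mid_eq {m : ℕ} (hm2 : 2 ≤ m) (hmu : 2 * m ≤ n + 1) :
    ∑ k ∈ Icc m (n + 1 - m), vv n c I k
      = VV n c I - 2 * vvhat n c I (m - 1) := by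
  have h := sum_split n (vv n c I) (show m - 1 ≤ n + 1 - m by omega)
    (show n + 1 - m ≤ n by omega)
  rw [show m - 1 + 1 = m from by omega] at h
  have ht : ∑ k ∈ Icc (n + 1 - m + 1) n, vv n c I k = ∑ k ∈ Icc 1 (m - 1), vv n c I k := by
    rw [show n + 1 - m + 1 = n + 1 - (m - 1) from by omega]
    exact tail_eq hI (by omega)
  rw [ht] at h
  unfold VV vvhat
  rw [h]
  ring

/-- prefix sums of `v`, explicitly. -/
theorem vhat_eq {k : ℕ} (hk2 : 2 ≤ k) (hku : 2 * k ≤ n + 1) :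
    ∑ j ∈ Icc 1 (k - 1), vv n c I j
      = ∑ m ∈ I, ((k - m : ℕ) : ℝ) * dd n c m := by
  unfold vv
  rw [Finset.sum_comm]
  refine Finset.sum_congr rfl fun m hm => ?_
  obtain ⟨h2, hu⟩ := hI m hm
  rw [← Finset.sum_filter]
  have : (Icc 1 (k - 1)).filter (fun j => m ≤ j ∧ j + m ≤ n + 1) = Icc m (k - 1) := by
    ext x
    simp only [Finset.mem_filter, Finset.mem_Icc]
    omega
  rw [this, Finset.sum_const, Nat.card_Icc, nsmul_eq_mul]
  congr 2
  omega

/-- `V` explicitly. -/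
theorem VV_eq : VV n c I = ∑ m ∈ I, dd n c m * ((n + 2 - 2 * m : ℕ) : ℝ) := by
  have h := inner_vv (c := c) hI (fun _ => (1 : ℝ))
  simp only [one_mul] at h
  unfold VV
  rw [h]
  refine Finset.sum_congr rfl fun m hm => ?_
  rw [Finset.sum_const, Nat.card_Icc, nsmul_eq_mul, mul_one]
  congr 2
  omega

/-- the `P` identity : `∑_{m∈I} d_m q_{mk} = P_{k-1}`. -/
theorem Pk_eq {k : ℕ} (hk2 : 2 ≤ k) (hku : 2 * k ≤ n + 1) :
    ∑ m ∈ I, dd n c m * qq n m k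
      = (n : ℝ) * vvhat n c I (k - 1) - ((k : ℝ) - 1) * VV n c I := by
  unfold vvhat
  rw [vhat_eq hI hk2 hku, VV_eq hI, Finset.mul_sum, Finset.mul_sum,
    ← Finset.sum_sub_distrib]
  refine Finset.sum_congr rfl fun m hm => ?_
  obtain ⟨h2, hu⟩ := hI m hm
  unfold qq
  rw [cast_sub' (a := n + 2) (b := 2 * m) (by omega)]
  push_cast
  ring

variable (hd : ∀ m ∈ I, 0 < dd n c m)
include hd

omit hI in
theorem vv_nonneg (k : ℕ) : 0 ≤ vv n c I k := by
  apply Finset.sum_nonneg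
  intro m hm
  split_ifs
  · exact le_of_lt (hd m hm)
  · exact le_refl 0

theorem vv_mono {i j : ℕ} (hij : i ≤ j) (hj : 2 * j ≤ n + 1) :
    vv n c I i ≤ vv n c I j := by
  apply Finset.sum_le_sum
  intro m hm
  obtain ⟨h2, hu⟩ := hI m hm
  split_ifs with ha hb hb
  · exact le_refl _
  · omega
  · exact le_of_lt (hd m hm)
  · exact le_refl _

omit hd in
theorem vv_one : vv n c I 1 = 0 := by
  apply Finset.sum_eq_zero
  intro m hm
  obtain ⟨h2, hu⟩ := hI m hm
  rw [if_neg (by omega)]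

theorem vv_u_pos {u : ℕ} (hu2 : 2 * u ≤ n + 1) (hun : n ≤ 2 * u) (hne : I.Nonempty) :
    0 < vv n c I u := by
  unfold vv
  have : ∀ m ∈ I, (if m ≤ u ∧ u + m ≤ n + 1 then dd n c m else 0) = dd n c m := by
    intro m hm
    obtain ⟨h2, hu⟩ := hI m hm
    rw [if_pos (by omega)]
  rw [Finset.sum_congr rfl this]
  exact Finset.sum_pos hd hne

/-- Claim C : negativity of `P_j = n v̂_j - j V`. -/
theorem P_neg {u j : ℕ} (hu2 : 2 * u ≤ n + 1) (hun : n ≤ 2 * u) (hne : I.Nonempty)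
    (hj1 : 1 ≤ j) (hju : j + 1 ≤ u) :
    (n : ℝ) * vvhat n c I j - (j : ℝ) * VV n c I < 0 := by
  have hsplit := sum_split n (vv n c I) (show j ≤ n - j by omega) (show n - j ≤ n by omega)
  have htail : ∑ k ∈ Icc (n - j + 1) n, vv n c I k = ∑ k ∈ Icc 1 j, vv n c I k := by
    rw [show n - j + 1 = n + 1 - j from by omega]
    exact tail_eq hI (by omega)
  rw [htail] at hsplit
  set M := ∑ k ∈ Icc (j + 1) (n - j), vv n c I k with hM
  have hVV : VV n c I = 2 * vvhat n c I j + M := by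
    unfold VV vvhat; rw [hsplit]; ring
  have hmid_ge : ∀ k ∈ Icc (j + 1) (n - j), vv n c I j ≤ vv n c I k := by
    intro k hk
    rw [Finset.mem_Icc] at hk
    by_cases h : 2 * k ≤ n + 1
    · exact vv_mono hI hd (by omega) h
    · have hs := vv_symm (c := c) hI (show k ≤ n by omega)
      rw [← hs]
      exact vv_mono hI hd (by omega) (by omega)
  have hM1 : ((n - 2 * j : ℕ) : ℝ) * vv n c I j ≤ M := by
    have := Finset.card_nsmul_le_sum (Icc (j + 1) (n - j)) (vv n c I) (vv n c I j) hmid_ge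
    rw [Nat.card_Icc] at this
    rw [show n - j + 1 - (j + 1) = n - 2 * j from by omega] at this
    rwa [nsmul_eq_mul] at this
  have hM2 : vv n c I u ≤ M := by
    apply Finset.single_le_sum (fun k _ => vv_nonneg hd k)
    rw [Finset.mem_Icc]; omega
  have hvhat : vvhat n c I j ≤ ((j : ℝ) - 1) * vv n c I j := by
    have hsp : ∑ k ∈ Icc 1 j, vv n c I k
        = ∑ k ∈ Icc 1 1, vv n c I k + ∑ k ∈ Icc 2 j, vv n c I k
          + ∑ k ∈ Icc (j+1) j, vv n c I k :=
      sum_split j (vv n c I) (show 1 ≤ j by omega) (le_refl j)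
    rw [show Icc (j+1) j = ∅ from Finset.Icc_eq_empty (by omega), Finset.sum_empty,
      Finset.Icc_self, Finset.sum_singleton, vv_one hI, add_zero, zero_add] at hsp
    have hb := Finset.sum_le_card_nsmul (Icc 2 j) (vv n c I) (vv n c I j)
      (fun k hk => vv_mono hI hd (Finset.mem_Icc.mp hk).2 (by omega))
    rw [Nat.card_Icc, show j + 1 - 2 = j - 1 from by omega, nsmul_eq_mul,
      cast_sub' (show 1 ≤ j from hj1)] at hb
    unfold vvhat
    rw [hsp]
    simpa using hb
  have hM1' : ((n : ℝ) - 2 * j) * vv n c I j ≤ M := by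
    rw [cast_sub' (show 2 * j ≤ n by omega)] at hM1
    push_cast at hM1
    exact hM1
  have hvu := vv_u_pos hI hd hu2 hun hne
  have hvj := vv_nonneg hd j
  have hc1 : 2 * (j : ℝ) + 1 ≤ (n : ℝ) := by exact_mod_cast (show 2 * j + 1 ≤ n by omega)
  have hc2 : 1 ≤ (j : ℝ) := by exact_mod_cast hj1
  rw [hVV]
  have e1 : ((n : ℝ) - 2 * j) * vvhat n c I j
      ≤ ((n : ℝ) - 2 * j) * (((j : ℝ) - 1) * vv n c I j) :=
    mul_le_mul_of_nonneg_left hvhat (by linarith)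
  have e2 : ((j : ℝ) - 1) * (((n : ℝ) - 2 * j) * vv n c I j) ≤ ((j : ℝ) - 1) * M :=
    mul_le_mul_of_nonneg_left hM1' (by linarith)
  nlinarith [e1, e2, hM2, hvu]

end SumSwapAux

/-- Theorem 1: a sum-`n+2` transform always results in a better sequence. -/
theorem sumSwapN2_better (n : ℕ) (hn : 2 ≤ n) (c : ℕ → ℝ)
    (hpos : ∀ k, 1 ≤ k → k ≤ n → 0 < c k)
    (hdist : ∀ i j, 1 ≤ i → i ≤ n → 1 ≤ j → j ≤ n → i ≠ j → c i ≠ c j)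
    (hne : ((Finset.Icc 2 ((n + 1) / 2)).filter (fun k => c k < c (n + 2 - k))).Nonempty)
    (hne' : ∃ k, 2 ≤ k ∧ k ≤ (n + 1) / 2 ∧ c (n + 2 - k) < c k) :
    varPS n c <
      varPS n (sumSwapN2 n
        ((Finset.Icc 2 ((n + 1) / 2)).filter (fun k => c k < c (n + 2 - k))) c) := by
  classical
  set u := (n + 1) / 2 with hu
  set I := (Finset.Icc 2 u).filter (fun k => c k < c (n + 2 - k)) with hIdef
  have hsub : I ⊆ Finset.Icc 2 u := Finset.filter_subset _ _
  have hI : ∀ m ∈ I, 2 ≤ m ∧ 2 * m ≤ n + 1 := by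
    intro m hm
    have := Finset.mem_Icc.mp (hsub hm)
    omega
  have hd : ∀ m ∈ I, 0 < SumSwapAux.dd n c m :=
    fun m hm => sub_pos.mpr (Finset.mem_filter.mp hm).2
  have hu2 : 2 * u ≤ n + 1 := by omega
  have hun : n ≤ 2 * u := by omega
  have hnR : (0:ℝ) < (n:ℝ) := by exact_mod_cast (show 0 < n by omega)
  -- the variance formula
  have key : ∀ b : ℕ → ℝ, (n:ℝ)^2 * varPS n b
      = (n:ℝ) * (∑ k ∈ Icc 1 n, (partSum b k)^2) - (∑ k ∈ Icc 1 n, partSum b k)^2 := by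
    intro b
    unfold varPS meanPS
    have e : ∀ k ∈ Icc 1 n, (partSum b k - 1/(n:ℝ) * ∑ j ∈ Icc 1 n, partSum b j)^2
        = (partSum b k)^2 - (2/(n:ℝ) * ∑ j ∈ Icc 1 n, partSum b j) * partSum b k
          + (1/(n:ℝ) * ∑ j ∈ Icc 1 n, partSum b j)^2 := fun k _ => by ring
    rw [Finset.sum_congr rfl e, Finset.sum_add_distrib, Finset.sum_sub_distrib,
      ← Finset.mul_sum, Finset.sum_const, Nat.card_Icc, nsmul_eq_mul,
      show n + 1 - 1 = n from rfl]
    have hne0 : (n:ℝ) ≠ 0 := ne_of_gt hnR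
    field_simp
    ring
  -- partial sums of the transform
  have hps : ∀ k ∈ Icc 1 n, partSum (sumSwapN2 n I c) k
      = partSum c k + SumSwapAux.vv n c I k := fun k hk =>
    SumSwapAux.partSum_swap hI (Finset.mem_Icc.mp hk).2
  have hT' : ∑ k ∈ Icc 1 n, partSum (sumSwapN2 n I c) k
      = (∑ k ∈ Icc 1 n, partSum c k) + SumSwapAux.VV n c I := by
    rw [Finset.sum_congr rfl hps, Finset.sum_add_distrib]
    rfl
  have hS2' : ∑ k ∈ Icc 1 n, (partSum (sumSwapN2 n I c) k)^2
      = (∑ k ∈ Icc 1 n, (partSum c k)^2)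
        + 2 * (∑ k ∈ Icc 1 n, partSum c k * SumSwapAux.vv n c I k)
        + (∑ k ∈ Icc 1 n, (SumSwapAux.vv n c I k)^2) := by
    rw [Finset.sum_congr rfl (fun k hk => by rw [hps k hk])]
    have e : ∀ k ∈ Icc 1 n, (partSum c k + SumSwapAux.vv n c I k)^2
        = (partSum c k)^2 + 2 * (partSum c k * SumSwapAux.vv n c I k)
          + (SumSwapAux.vv n c I k)^2 := fun k _ => by ring
    rw [Finset.sum_congr rfl e, Finset.sum_add_distrib, Finset.sum_add_distrib,
      ← Finset.mul_sum]
  -- the difference of (scaled) variances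
  have hE : (n:ℝ)^2 * varPS n (sumSwapN2 n I c) - (n:ℝ)^2 * varPS n c
      = 2 * ((n:ℝ) * (∑ k ∈ Icc 1 n, partSum c k * SumSwapAux.vv n c I k)
            - (∑ k ∈ Icc 1 n, partSum c k) * SumSwapAux.VV n c I)
        + ((n:ℝ) * (∑ k ∈ Icc 1 n, (SumSwapAux.vv n c I k)^2)
            - (SumSwapAux.VV n c I)^2) := by
    rw [key, key, hT', hS2']
    ring
  -- the first summand, via the star identity
  have hA : (n:ℝ) * (∑ k ∈ Icc 1 n, partSum c k * SumSwapAux.vv n c I k)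
        - (∑ k ∈ Icc 1 n, partSum c k) * SumSwapAux.VV n c I
      = ∑ k ∈ Icc 2 u, (c (n + 2 - k) - c k)
          * ((n:ℝ) * SumSwapAux.vvhat n c I (k - 1)
              - ((k:ℝ) - 1) * SumSwapAux.VV n c I) := by
    have s1 : (n:ℝ) * (∑ k ∈ Icc 1 n, partSum c k * SumSwapAux.vv n c I k)
          - (∑ k ∈ Icc 1 n, partSum c k) * SumSwapAux.VV n c I
        = ∑ m ∈ I, SumSwapAux.dd n c m
            * (∑ k ∈ Icc 2 u, (c (n + 2 - k) - c k) * SumSwapAux.qq n m k) := by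
      rw [SumSwapAux.inner_vv (c := c) hI (partSum c), SumSwapAux.VV_eq hI,
        Finset.mul_sum, Finset.mul_sum, ← Finset.sum_sub_distrib]
      refine Finset.sum_congr rfl fun m hm => ?_
      obtain ⟨h2, hu'⟩ := hI m hm
      rw [← SumSwapAux.star c h2 (show m ≤ u by omega) hu2 hun,
        SumSwapAux.cast_sub' (a := n + 2) (b := 2 * m) (by omega)]
      push_cast
      ring
    rw [s1]
    simp only [Finset.mul_sum]
    rw [Finset.sum_comm]
    refine Finset.sum_congr rfl fun k hk => ?_
    rw [Finset.mem_Icc] at hk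
    rw [← SumSwapAux.Pk_eq hI hk.1 (by omega), Finset.mul_sum]
    exact Finset.sum_congr rfl fun m _ => by ring
  -- the second summand, via the mid identity
  have hB : (n:ℝ) * (∑ k ∈ Icc 1 n, (SumSwapAux.vv n c I k)^2)
        - (SumSwapAux.VV n c I)^2
      = ∑ m ∈ I, SumSwapAux.dd n c m
          * (-2 * ((n:ℝ) * SumSwapAux.vvhat n c I (m - 1)
              - ((m:ℝ) - 1) * SumSwapAux.VV n c I)) := by
    rw [Finset.sum_congr rfl (fun k (_ : k ∈ Icc 1 n) => pow_two (SumSwapAux.vv n c I k)),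
      SumSwapAux.inner_vv (c := c) hI (SumSwapAux.vv n c I), pow_two]
    nth_rewrite 2 [SumSwapAux.VV_eq hI]
    rw [Finset.mul_sum, Finset.mul_sum, ← Finset.sum_sub_distrib]
    refine Finset.sum_congr rfl fun m hm => ?_
    obtain ⟨h2, hu'⟩ := hI m hm
    rw [SumSwapAux.mid_eq hI h2 hu',
      SumSwapAux.cast_sub' (a := n + 2) (b := 2 * m) (by omega)]
    push_cast
    ring
  -- combine
  have hfin : (n:ℝ)^2 * varPS n (sumSwapN2 n I c) - (n:ℝ)^2 * varPS n c
      = 2 * ∑ k ∈ Icc 2 u \ I, (c (n + 2 - k) - c k)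
          * ((n:ℝ) * SumSwapAux.vvhat n c I (k - 1)
              - ((k:ℝ) - 1) * SumSwapAux.VV n c I) := by
    rw [hE, hA, hB]
    rw [← Finset.sum_sdiff hsub (f := fun k => (c (n + 2 - k) - c k)
      * ((n:ℝ) * SumSwapAux.vvhat n c I (k - 1) - ((k:ℝ) - 1) * SumSwapAux.VV n c I))]
    have e2 : ∀ m ∈ I, SumSwapAux.dd n c m
          * (-2 * ((n:ℝ) * SumSwapAux.vvhat n c I (m - 1)
              - ((m:ℝ) - 1) * SumSwapAux.VV n c I))
        = -2 * ((c (n + 2 - m) - c m)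
            * ((n:ℝ) * SumSwapAux.vvhat n c I (m - 1)
              - ((m:ℝ) - 1) * SumSwapAux.VV n c I)) := by
      intro m hm
      unfold SumSwapAux.dd
      ring
    rw [Finset.sum_congr rfl e2, ← Finset.mul_sum]
    ring
  -- positivity of the remaining sum
  have hpos' : 0 < ∑ k ∈ Icc 2 u \ I, (c (n + 2 - k) - c k)
      * ((n:ℝ) * SumSwapAux.vvhat n c I (k - 1)
          - ((k:ℝ) - 1) * SumSwapAux.VV n c I) := by
    apply Finset.sum_pos
    · intro k hk
      rw [Finset.mem_sdiff] at hk
      obtain ⟨hkIcc, hkI⟩ := hk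
      rw [Finset.mem_Icc] at hkIcc
      have hkd : c (n + 2 - k) < c k := by
        have hne1 : c k ≠ c (n + 2 - k) :=
          hdist k (n + 2 - k) (by omega) (by omega) (by omega) (by omega) (by omega)
        have hnlt : ¬ (c k < c (n + 2 - k)) := fun hlt =>
          hkI (Finset.mem_filter.mpr ⟨Finset.mem_Icc.mpr hkIcc, hlt⟩)
        exact lt_of_le_of_ne (not_lt.mp hnlt) hne1.symm
      have hPneg : (n:ℝ) * SumSwapAux.vvhat n c I (k - 1)
          - ((k:ℝ) - 1) * SumSwapAux.VV n c I < 0 := by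
        have h := SumSwapAux.P_neg hI hd hu2 hun hne (j := k - 1) (by omega) (by omega)
        rw [SumSwapAux.cast_sub' (a := k) (b := 1) (by omega), Nat.cast_one] at h
        exact h
      exact mul_pos_of_neg_of_neg (by linarith) hPneg
    · obtain ⟨k0, h1, h2, h3⟩ := hne'
      refine ⟨k0, Finset.mem_sdiff.mpr ⟨Finset.mem_Icc.mpr ⟨h1, h2⟩, fun hk0 => ?_⟩⟩
      exact absurd (Finset.mem_filter.mp hk0).2 (not_lt.mpr (le_of_lt h3))
  have hlt : (n:ℝ)^2 * varPS n c < (n:ℝ)^2 * varPS n (sumSwapN2 n I c) := by nlinarith [hfin, hpos']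
  have hn2 : (0:ℝ) < (n:ℝ)^2 := by positivity
  exact lt_of_mul_lt_mul_left hlt (le_of_lt hn2)
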